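/- Let f : ℝ → ℝ be integrable with ∬_{xy>0} min(|x|,|y|) |f(x)| |f(y)| dx dy < ∞. Then C[f] = ∬_{xy>0} min(|x|,|y|) f(x) f(y) dx dy ≥ 0, and C[f] = 0 if and only if f = 0 almost everywhere. In other words, the quadratic form C is positive-definite on this class of functions. -/

import Mathlib

open MeasureTheory ENNReal

-- Aux: continuous, a.e. zero on Ioi 0 => zero on Ici 0
lemma cont_zero_of_ae_zero {φ : ℝ → ℝ} (hφ : Continuous φ)
    (h : ∀ᵐ t ∂(volume.restrict (Set.Ioi (0:ℝ))), φ t = 0) :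
    ∀ t : ℝ, 0 ≤ t → φ t = 0 := by
  intro t ht
  have h' : ∀ᵐ s ∂(volume : Measure ℝ), s ∈ Set.Ioi (0:ℝ) → φ s = 0 :=
    (ae_restrict_iff' measurableSet_Ioi).mp h
  have hnull : volume {s : ℝ | ¬ (s ∈ Set.Ioi (0:ℝ) → φ s = 0)} = 0 := h'
  have hcl : t ∈ closure {s : ℝ | 0 < s ∧ φ s = 0} := by
    rw [Metric.mem_closure_iff]
    intro ε hε
    by_contra hemp
    push_neg at hemp
    have hsub : Set.Ioo t (t + ε) ⊆ {s : ℝ | ¬ (s ∈ Set.Ioi (0:ℝ) → φ s = 0)} := by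
      intro s hs
      intro hcontra
      have h0s : 0 < s := lt_of_le_of_lt ht hs.1
      exact absurd (hemp s ⟨h0s, hcontra h0s⟩)
        (by simp [Real.dist_eq, abs_lt]; constructor <;> [linarith [hs.1, hs.2]; linarith [hs.1, hs.2]])
    have := measure_mono_null hsub hnull
    rw [Real.volume_Ioo] at this
    simp at this
    linarith
  have hclosed : IsClosed {s : ℝ | φ s = 0} := isClosed_eq hφ continuous_const
  have : t ∈ {s : ℝ | φ s = 0} :=
    hclosed.closure_subset (closure_mono (fun s hs => hs.2) hcl)
  exact this

-- Aux: all Iic integrals vanish + total vanishes => f = 0 a.e.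
lemma ae_zero_of_Iic {f : ℝ → ℝ} (hf : Measurable f) (hint : Integrable f)
    (hG : ∀ t : ℝ, ∫ x in Set.Iic t, f x = 0) (htot : ∫ x, f x = 0) :
    f =ᵐ[volume] 0 := by
  set p : ℝ → ℝ≥0∞ := fun x => ENNReal.ofReal (f x) with hp
  set q : ℝ → ℝ≥0∞ := fun x => ENNReal.ofReal (-f x) with hq
  have hpm : Measurable p := hf.ennreal_ofReal
  have hqm : Measurable q := hf.neg.ennreal_ofReal
  have hple : ∀ x, p x ≤ ‖f x‖₊ := fun x => by
    simp only [hp, ← ofReal_coe_nnreal, coe_nnnorm]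
    exact ENNReal.ofReal_le_ofReal (le_abs_self _)
  have hqle : ∀ x, q x ≤ ‖f x‖₊ := fun x => by
    simp only [hq, ← ofReal_coe_nnreal, coe_nnnorm]
    exact ENNReal.ofReal_le_ofReal (neg_le_abs _)
  have hnf : (∫⁻ x, (‖f x‖₊ : ℝ≥0∞)) < ⊤ := hint.2
  have hpfin : (∫⁻ x, p x) < ⊤ := lt_of_le_of_lt (lintegral_mono hple) hnf
  have hqfin : (∫⁻ x, q x) < ⊤ := lt_of_le_of_lt (lintegral_mono hqle) hnf
  -- key: for every measure-restriction to a set s on which ∫ f = 0 and integrable: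
  have key : ∀ s : Set ℝ, MeasurableSet s → (∫ x in s, f x) = 0 →
      (∫⁻ x in s, p x) = ∫⁻ x in s, q x := by
    intro s hs hzero
    have hi : Integrable f (volume.restrict s) := hint.restrict
    have := integral_eq_lintegral_pos_part_sub_lintegral_neg_part hi
    rw [hzero] at this
    have h1 : (∫⁻ x in s, p x) < ⊤ := lt_of_le_of_lt (lintegral_mono hple) hi.2
    have h2 : (∫⁻ x in s, q x) < ⊤ := lt_of_le_of_lt (lintegral_mono hqle) hi.2
    have := sub_eq_zero.mp this.symm
    exact (ENNReal.toReal_eq_toReal_iff' h1.ne h2.ne).mp this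
  have hmeq : volume.withDensity p = volume.withDensity q := by
    have hfinp : IsFiniteMeasure (volume.withDensity p) := by
      constructor; rw [withDensity_apply _ MeasurableSet.univ, setLIntegral_univ]; exact hpfin
    have hfinq : IsFiniteMeasure (volume.withDensity q) := by
      constructor; rw [withDensity_apply _ MeasurableSet.univ, setLIntegral_univ]; exact hqfin
    refine ext_of_generate_finite (Set.range Set.Iic) (borel_eq_generateFrom_Iic ℝ)
      isPiSystem_Iic ?_ ?_
    · rintro s ⟨t, rfl⟩
      rw [withDensity_apply _ measurableSet_Iic, withDensity_apply _ measurableSet_Iic]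
      exact key _ measurableSet_Iic (hG t)
    · rw [withDensity_apply _ MeasurableSet.univ, withDensity_apply _ MeasurableSet.univ]
      have := key Set.univ MeasurableSet.univ (by rwa [setIntegral_univ])
      simpa [setLIntegral_univ] using this
  have hae : p =ᵐ[volume] q :=
    (withDensity_eq_iff hpm.aemeasurable hqm.aemeasurable hpfin.ne).mp hmeq
  filter_upwards [hae] with x hx
  simp only [hp, hq] at hx
  rcases lt_trichotomy (f x) 0 with h | h | h
  · exfalso
    rw [ENNReal.ofReal_eq_zero.mpr h.le] at hx
    exact absurd hx.symm (ne_of_gt (ENNReal.ofReal_pos.mpr (by linarith)))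
  · exact h
  · exfalso
    rw [ENNReal.ofReal_eq_zero.mpr (by linarith : -f x ≤ 0)] at hx
    exact absurd hx (ne_of_gt (ENNReal.ofReal_pos.mpr h))

lemma cont_Iic {f : ℝ → ℝ} (hint : Integrable f) :
    Continuous fun x : ℝ => ∫ u in Set.Iic x, f u := by
  have h1 : Continuous fun b : ℝ => ∫ x in (0:ℝ)..b, f x := hint.continuous_primitive 0
  have h2 : (fun x : ℝ => ∫ u in Set.Iic x, f u)
      = fun x : ℝ => (∫ x in (0:ℝ)..x, f x) + ∫ u in Set.Iic (0:ℝ), f u := by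
    funext x
    rw [← intervalIntegral.integral_Iic_sub_Iic hint.integrableOn hint.integrableOn]
    ring
  rw [h2]
  exact h1.add continuous_const

lemma cont_Ioi {f : ℝ → ℝ} (hint : Integrable f) :
    Continuous fun x : ℝ => ∫ u in Set.Ioi x, f u := by
  have h2 : (fun x : ℝ => ∫ u in Set.Ioi x, f u)
      = fun x : ℝ => (∫ u, f u) - ∫ u in Set.Iic x, f u := by
    funext x
    rw [← intervalIntegral.integral_Iic_add_Ioi hint.integrableOn hint.integrableOn]
    ring
  rw [h2]
  exact continuous_const.sub (cont_Iic hint)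

section
variable {f : ℝ → ℝ}

lemma fubini_key (hf : Measurable f) (hint : Integrable f)
    (hfin : (∫⁻ p in {p : ℝ × ℝ | 0 < p.1 * p.2},
        ENNReal.ofReal (min (|p.1|) (|p.2|) * |f p.1| * |f p.2|)) < ⊤) :
    (∫ p in {p : ℝ × ℝ | 0 < p.1 * p.2}, min (|p.1|) (|p.2|) * f p.1 * f p.2)
      = ∫ t in Set.Ioi (0:ℝ), ((∫ x in Set.Ioi t, f x)^2 + (∫ x in Set.Iio (-t), f x)^2) ∧
    Integrable (fun t => (∫ x in Set.Ioi t, f x)^2 + (∫ x in Set.Iio (-t), f x)^2)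
      (volume.restrict (Set.Ioi (0:ℝ))) := by
  set S : Set (ℝ × ℝ) := {p : ℝ × ℝ | 0 < p.1 * p.2} with hSdef
  have hS : MeasurableSet S := measurableSet_lt measurable_const (measurable_fst.mul measurable_snd)
  set μ : Measure ℝ := volume.restrict (Set.Ioi (0:ℝ)) with hμdef
  set ν : Measure (ℝ × ℝ) := volume.restrict S with hνdef
  set g : ℝ × ℝ → ℝ := fun q => f q.1 * f q.2 with hgdef
  have hgm : Measurable g := (hf.comp measurable_fst).mul (hf.comp measurable_snd)
  have hgint : Integrable g (volume : Measure (ℝ × ℝ)) := by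
    rw [Measure.volume_eq_prod]
    exact hint.mul_prod hint
  set F : ℝ → ℝ × ℝ → ℝ := fun t p =>
    Set.indicator (Set.Ioi t ×ˢ Set.Ioi t) g p
      + Set.indicator (Set.Iio (-t) ×ˢ Set.Iio (-t)) g p with hFdef
  -- measurability of the uncurried function
  have hUm : MeasurableSet {z : ℝ × (ℝ × ℝ) | z.1 < z.2.1 ∧ z.1 < z.2.2} :=
    (measurableSet_lt measurable_fst (measurable_fst.comp measurable_snd)).inter
      (measurableSet_lt measurable_fst (measurable_snd.comp measurable_snd))
  have hVm : MeasurableSet {z : ℝ × (ℝ × ℝ) | z.2.1 < -z.1 ∧ z.2.2 < -z.1} :=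
    (measurableSet_lt (measurable_fst.comp measurable_snd) measurable_fst.neg).inter
      (measurableSet_lt (measurable_snd.comp measurable_snd) measurable_fst.neg)
  have hFm : Measurable (Function.uncurry F) := by
    have : Function.uncurry F = fun z : ℝ × (ℝ × ℝ) =>
        Set.indicator {z : ℝ × (ℝ × ℝ) | z.1 < z.2.1 ∧ z.1 < z.2.2} (fun w => g w.2) z
          + Set.indicator {z : ℝ × (ℝ × ℝ) | z.2.1 < -z.1 ∧ z.2.2 < -z.1} (fun w => g w.2) z := by
      funext z
      simp only [Function.uncurry, hFdef, Set.indicator_apply, Set.mem_prod, Set.mem_Ioi,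
        Set.mem_Iio, Set.mem_setOf_eq]
    rw [this]
    exact ((hgm.comp measurable_snd).indicator hUm).add ((hgm.comp measurable_snd).indicator hVm)
  -- finiteness of the double lintegral
  have hF_fin : HasFiniteIntegral (Function.uncurry F) (μ.prod ν) := by
    show (∫⁻ z, (‖Function.uncurry F z‖₊ : ℝ≥0∞) ∂(μ.prod ν)) < ⊤
    rw [lintegral_prod_symm _ (hFm.nnnorm.coe_nnreal_ennreal).aemeasurable]
    have hinner : ∀ p ∈ S, (∫⁻ t, (‖F t p‖₊ : ℝ≥0∞) ∂μ)
        = ENNReal.ofReal (min (|p.1|) (|p.2|) * |f p.1| * |f p.2|) := by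
      intro p hp
      have hptw : ∀ t ∈ Set.Ioi (0:ℝ), (‖F t p‖₊ : ℝ≥0∞)
          = Set.indicator (Set.Iio p.1 ∩ Set.Iio p.2) (fun _ => (‖g p‖₊ : ℝ≥0∞)) t
            + Set.indicator (Set.Iio (-p.1) ∩ Set.Iio (-p.2)) (fun _ => (‖g p‖₊ : ℝ≥0∞)) t := by
        intro t ht
        simp only [Set.mem_Ioi] at ht
        have mem1 : p ∈ Set.Ioi t ×ˢ Set.Ioi t ↔ t < p.1 ∧ t < p.2 := by
          simp [Set.mem_prod]
        have mem2 : p ∈ Set.Iio (-t) ×ˢ Set.Iio (-t) ↔ p.1 < -t ∧ p.2 < -t := by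
          simp [Set.mem_prod]
        have memI1 : t ∈ Set.Iio p.1 ∩ Set.Iio p.2 ↔ t < p.1 ∧ t < p.2 := by
          simp
        have memI2 : t ∈ Set.Iio (-p.1) ∩ Set.Iio (-p.2) ↔ p.1 < -t ∧ p.2 < -t := by
          simp [lt_neg]
        by_cases h1 : t < p.1 ∧ t < p.2
        · have h2 : ¬ (p.1 < -t ∧ p.2 < -t) := by rintro ⟨ha, -⟩; linarith [h1.1]
          rw [hFdef]
          simp only []
          rw [Set.indicator_of_mem (mem1.mpr h1), Set.indicator_of_notMem (mem2.not.mpr h2),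
            Set.indicator_of_mem (memI1.mpr h1), Set.indicator_of_notMem (memI2.not.mpr h2),
            add_zero, add_zero]
        · by_cases h2 : p.1 < -t ∧ p.2 < -t
          · rw [hFdef]
            simp only []
            rw [Set.indicator_of_notMem (mem1.not.mpr h1), Set.indicator_of_mem (mem2.mpr h2),
              Set.indicator_of_notMem (memI1.not.mpr h1), Set.indicator_of_mem (memI2.mpr h2),
              zero_add, zero_add]
          · rw [hFdef]
            simp only []
            rw [Set.indicator_of_notMem (mem1.not.mpr h1), Set.indicator_of_notMem (mem2.not.mpr h2),
              Set.indicator_of_notMem (memI1.not.mpr h1), Set.indicator_of_notMem (memI2.not.mpr h2),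
              add_zero, add_zero, nnnorm_zero, ENNReal.coe_zero]
      rw [hμdef, setLIntegral_congr_fun (f := fun t => (‖F t p‖₊ : ℝ≥0∞)) measurableSet_Ioi
        hptw]
      rw [lintegral_add_left ((measurable_const.indicator
        (measurableSet_Iio.inter measurableSet_Iio)))]
      rw [lintegral_indicator (measurableSet_Iio.inter measurableSet_Iio),
        lintegral_indicator (measurableSet_Iio.inter measurableSet_Iio)]
      rw [Measure.restrict_restrict (measurableSet_Iio.inter measurableSet_Iio),
        Measure.restrict_restrict (measurableSet_Iio.inter measurableSet_Iio),
        setLIntegral_const, setLIntegral_const]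
      have hset1 : Set.Iio p.1 ∩ Set.Iio p.2 ∩ Set.Ioi 0 = Set.Ioo 0 (min p.1 p.2) := by
        ext x; simp [Set.mem_Ioo, and_comm, lt_min_iff, and_assoc]
      have hset2 : Set.Iio (-p.1) ∩ Set.Iio (-p.2) ∩ Set.Ioi 0
          = Set.Ioo 0 (min (-p.1) (-p.2)) := by
        ext x; simp [Set.mem_Ioo, and_comm, lt_min_iff, and_assoc]
      rw [hset1, hset2, Real.volume_Ioo, Real.volume_Ioo, sub_zero, sub_zero]
      have hgnorm : (‖g p‖₊ : ℝ≥0∞) = ENNReal.ofReal (|f p.1| * |f p.2|) := by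
        rw [← ofReal_coe_nnreal, coe_nnnorm]
        congr 1
        rw [hgdef]
        simp [abs_mul]
      rw [hgnorm]
      have hp' : 0 < p.1 * p.2 := hp
      rcases _root_.mul_pos_iff.mp hp' with h | h
      · have e1 : ENNReal.ofReal (min (-p.1) (-p.2)) = 0 :=
          ENNReal.ofReal_eq_zero.mpr (by simp [min_le_iff]; left; linarith [h.1])
        rw [e1, mul_zero, add_zero, ← ENNReal.ofReal_mul (by positivity)]
        congr 1
        rw [abs_of_pos h.1, abs_of_pos h.2]
        ring
      · have e1 : ENNReal.ofReal (min p.1 p.2) = 0 :=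
          ENNReal.ofReal_eq_zero.mpr (by simp [min_le_iff]; left; linarith [h.1])
        rw [e1, mul_zero, zero_add, ← ENNReal.ofReal_mul (by positivity)]
        congr 1
        rw [abs_of_neg h.1, abs_of_neg h.2]
        ring
    have : (∫⁻ p, (∫⁻ t, (‖Function.uncurry F (t, p)‖₊ : ℝ≥0∞) ∂μ) ∂ν)
        = ∫⁻ p, ENNReal.ofReal (min (|p.1|) (|p.2|) * |f p.1| * |f p.2|) ∂ν := by
      refine lintegral_congr_ae ?_
      filter_upwards [ae_restrict_mem hS] with p hp
      exact hinner p hp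
    rw [this]
    exact hfin
  have hF : Integrable (Function.uncurry F) (μ.prod ν) := ⟨hFm.aestronglyMeasurable, hF_fin⟩
  set A : ℝ → ℝ := fun t => ∫ x in Set.Ioi t, f x with hAdef
  set B : ℝ → ℝ := fun t => ∫ x in Set.Iio (-t), f x with hBdef
  -- inner integral in p, for t > 0
  have hleft : ∀ t ∈ Set.Ioi (0:ℝ), (∫ p, F t p ∂ν) = A t ^ 2 + B t ^ 2 := by
    intro t ht
    simp only [Set.mem_Ioi] at ht
    have hQM1 : MeasurableSet (Set.Ioi t ×ˢ Set.Ioi t : Set (ℝ × ℝ)) :=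
      measurableSet_Ioi.prod measurableSet_Ioi
    have hQM2 : MeasurableSet (Set.Iio (-t) ×ˢ Set.Iio (-t) : Set (ℝ × ℝ)) :=
      measurableSet_Iio.prod measurableSet_Iio
    have hsub1 : (Set.Ioi t ×ˢ Set.Ioi t : Set (ℝ × ℝ)) ⊆ S := by
      rintro ⟨a, b⟩ ⟨ha, hb⟩
      exact mul_pos (lt_trans ht ha) (lt_trans ht hb)
    have hsub2 : (Set.Iio (-t) ×ˢ Set.Iio (-t) : Set (ℝ × ℝ)) ⊆ S := by
      rintro ⟨a, b⟩ ⟨ha, hb⟩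
      have h1 : a < 0 := lt_trans ha (by linarith)
      have h2 : b < 0 := lt_trans hb (by linarith)
      exact mul_pos_of_neg_of_neg h1 h2
    have hgν : Integrable g ν := hgint.restrict
    rw [hFdef]
    simp only []
    rw [integral_add (hgν.indicator hQM1) (hgν.indicator hQM2)]
    rw [hνdef, setIntegral_indicator hQM1, setIntegral_indicator hQM2,
      Set.inter_eq_self_of_subset_right hsub1, Set.inter_eq_self_of_subset_right hsub2]
    have e1 : (∫ p in (Set.Ioi t ×ˢ Set.Ioi t : Set (ℝ × ℝ)), g p) = A t * A t := by
      rw [hgdef, Measure.volume_eq_prod]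
      exact setIntegral_prod_mul f f _ _
    have e2 : (∫ p in (Set.Iio (-t) ×ˢ Set.Iio (-t) : Set (ℝ × ℝ)), g p) = B t * B t := by
      rw [hgdef, Measure.volume_eq_prod]
      exact setIntegral_prod_mul f f _ _
    rw [e1, e2, sq, sq]
  -- inner integral in t, for p ∈ S
  have hright : ∀ p ∈ S, (∫ t, F t p ∂μ) = min (|p.1|) (|p.2|) * f p.1 * f p.2 := by
    intro p hp
    have hp' : 0 < p.1 * p.2 := hp
    have hfun : (fun t => F t p)
        = fun t => Set.indicator (Set.Iio p.1 ∩ Set.Iio p.2) (fun _ => g p) t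
          + Set.indicator (Set.Iio (-p.1) ∩ Set.Iio (-p.2)) (fun _ => g p) t := by
      funext t
      have mem1 : p ∈ Set.Ioi t ×ˢ Set.Ioi t ↔ t ∈ Set.Iio p.1 ∩ Set.Iio p.2 := by
        simp [Set.mem_prod]
      have mem2 : p ∈ Set.Iio (-t) ×ˢ Set.Iio (-t) ↔ t ∈ Set.Iio (-p.1) ∩ Set.Iio (-p.2) := by
        simp [Set.mem_prod, lt_neg]
      rw [hFdef]
      simp only []
      by_cases h1 : t ∈ Set.Iio p.1 ∩ Set.Iio p.2
      · rw [Set.indicator_of_mem (mem1.mpr h1), Set.indicator_of_mem h1]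
        by_cases h2 : t ∈ Set.Iio (-p.1) ∩ Set.Iio (-p.2)
        · rw [Set.indicator_of_mem (mem2.mpr h2), Set.indicator_of_mem h2]
        · rw [Set.indicator_of_notMem (mem2.not.mpr h2), Set.indicator_of_notMem h2]
      · rw [Set.indicator_of_notMem (mem1.not.mpr h1), Set.indicator_of_notMem h1]
        by_cases h2 : t ∈ Set.Iio (-p.1) ∩ Set.Iio (-p.2)
        · rw [Set.indicator_of_mem (mem2.mpr h2), Set.indicator_of_mem h2]
        · rw [Set.indicator_of_notMem (mem2.not.mpr h2), Set.indicator_of_notMem h2]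
    have hsetA : Set.Iio p.1 ∩ Set.Iio p.2 ∩ Set.Ioi 0 = Set.Ioo 0 (min p.1 p.2) := by
      ext x; simp [Set.mem_Ioo, and_comm, lt_min_iff, and_assoc]
    have hsetB : Set.Iio (-p.1) ∩ Set.Iio (-p.2) ∩ Set.Ioi 0 = Set.Ioo 0 (min (-p.1) (-p.2)) := by
      ext x; simp [Set.mem_Ioo, and_comm, lt_min_iff, and_assoc]
    have hMM : MeasurableSet (Set.Iio p.1 ∩ Set.Iio p.2) := measurableSet_Iio.inter measurableSet_Iio
    have hMM' : MeasurableSet (Set.Iio (-p.1) ∩ Set.Iio (-p.2)) :=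
      measurableSet_Iio.inter measurableSet_Iio
    have hint1 : Integrable (fun t => Set.indicator (Set.Iio p.1 ∩ Set.Iio p.2) (fun _ => g p) t) μ := by
      rw [integrable_indicator_iff hMM]
      refine (integrableOn_const_iff (by finiteness)).mpr (Or.inr ?_)
      rw [hμdef, Measure.restrict_apply hMM, hsetA, Real.volume_Ioo]
      exact ofReal_lt_top
    have hint2 : Integrable (fun t => Set.indicator (Set.Iio (-p.1) ∩ Set.Iio (-p.2)) (fun _ => g p) t) μ := by
      rw [integrable_indicator_iff hMM']
      refine (integrableOn_const_iff (by finiteness)).mpr (Or.inr ?_)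
      rw [hμdef, Measure.restrict_apply hMM', hsetB, Real.volume_Ioo]
      exact ofReal_lt_top
    rw [hfun, integral_add hint1 hint2, hμdef,
      setIntegral_indicator hMM, setIntegral_indicator hMM',
      Set.inter_comm (Set.Ioi 0) _, Set.inter_comm (Set.Ioi 0) _,
      hsetA, hsetB, setIntegral_const, setIntegral_const, measureReal_def, measureReal_def,
      Real.volume_Ioo, Real.volume_Ioo, sub_zero, sub_zero, smul_eq_mul, smul_eq_mul]
    rcases _root_.mul_pos_iff.mp hp' with h | h
    · have e2 : ENNReal.ofReal (min (-p.1) (-p.2)) = 0 :=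
        ENNReal.ofReal_eq_zero.mpr (by simp [min_le_iff]; left; linarith [h.1])
      rw [e2, ENNReal.toReal_zero, zero_mul, add_zero,
        ENNReal.toReal_ofReal (le_min h.1.le h.2.le), hgdef]
      simp only []
      rw [abs_of_pos h.1, abs_of_pos h.2]
      ring
    · have e2 : ENNReal.ofReal (min p.1 p.2) = 0 :=
        ENNReal.ofReal_eq_zero.mpr (by simp [min_le_iff]; left; linarith [h.1])
      rw [e2, ENNReal.toReal_zero, zero_mul, zero_add,
        ENNReal.toReal_ofReal (le_min (by linarith [h.1] : (0:ℝ) ≤ -p.1) (by linarith [h.2])), hgdef]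
      simp only []
      rw [abs_of_neg h.1, abs_of_neg h.2]
      ring
  have hswap := integral_integral_swap hF
  constructor
  · calc (∫ p in S, min (|p.1|) (|p.2|) * f p.1 * f p.2)
        = ∫ p, (∫ t, F t p ∂μ) ∂ν := by
          refine setIntegral_congr_fun hS ?_
          intro p hp
          exact (hright p hp).symm
      _ = ∫ t, (∫ p, F t p ∂ν) ∂μ := hswap.symm
      _ = ∫ t in Set.Ioi (0:ℝ), (A t ^ 2 + B t ^ 2) := by
          refine setIntegral_congr_fun measurableSet_Ioi ?_
          intro t ht
          exact hleft t ht
  · have hI : Integrable (fun t => ∫ p, Function.uncurry F (t, p) ∂ν) μ := hF.integral_prod_left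
    refine hI.congr ?_
    filter_upwards [ae_restrict_mem measurableSet_Ioi] with t ht
    exact hleft t ht


/-- The quadratic form `C[f] = ∬_{xy>0} min(|x|,|y|) f(x) f(y) dx dy`
is positive-definite: for integrable `f` with the double integral absolutely
convergent, `C[f] ≥ 0` and `C[f] = 0` iff `f = 0` almost everywhere. -/
theorem stmt_3 (f : ℝ → ℝ) (hf : Measurable f) (hint : Integrable f)
    (hfin : (∫⁻ p in {p : ℝ × ℝ | 0 < p.1 * p.2},
        ENNReal.ofReal (min (|p.1|) (|p.2|) * |f p.1| * |f p.2|)) < ⊤) :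
    0 ≤ (∫ p in {p : ℝ × ℝ | 0 < p.1 * p.2}, min (|p.1|) (|p.2|) * f p.1 * f p.2) ∧
      ((∫ p in {p : ℝ × ℝ | 0 < p.1 * p.2}, min (|p.1|) (|p.2|) * f p.1 * f p.2) = 0 ↔
        f =ᵐ[volume] 0) := by

  obtain ⟨hkey, hInt⟩ := fubini_key hf hint hfin
  constructor
  · rw [hkey]
    exact integral_nonneg (fun t => by positivity)
  constructor
  · intro h0
    rw [hkey] at h0
    have hae : (fun t => (∫ x in Set.Ioi t, f x) ^ 2 + (∫ x in Set.Iio (-t), f x) ^ 2)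
        =ᵐ[volume.restrict (Set.Ioi (0:ℝ))] 0 :=
      (integral_eq_zero_iff_of_nonneg (fun t => by positivity) hInt).mp h0
    have haeA : ∀ᵐ t ∂(volume.restrict (Set.Ioi (0:ℝ))), (∫ x in Set.Ioi t, f x) = 0 := by
      filter_upwards [hae] with t ht
      have ht' : (∫ x in Set.Ioi t, f x) ^ 2 + (∫ x in Set.Iio (-t), f x) ^ 2 = 0 := ht
      nlinarith [sq_nonneg (∫ x in Set.Ioi t, f x), sq_nonneg (∫ x in Set.Iio (-t), f x)]
    have haeB : ∀ᵐ t ∂(volume.restrict (Set.Ioi (0:ℝ))), (∫ x in Set.Iio (-t), f x) = 0 := by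
      filter_upwards [hae] with t ht
      have ht' : (∫ x in Set.Ioi t, f x) ^ 2 + (∫ x in Set.Iio (-t), f x) ^ 2 = 0 := ht
      nlinarith [sq_nonneg (∫ x in Set.Ioi t, f x), sq_nonneg (∫ x in Set.Iio (-t), f x)]
    have hA : ∀ t : ℝ, 0 ≤ t → (∫ x in Set.Ioi t, f x) = 0 :=
      cont_zero_of_ae_zero (cont_Ioi hint) haeA
    have hcontB : Continuous fun t : ℝ => ∫ x in Set.Iio (-t), f x := by
      have : (fun t : ℝ => ∫ x in Set.Iio (-t), f x)
          = fun t : ℝ => ∫ x in Set.Iic (-t), f x := by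
        funext t
        exact (integral_Iic_eq_integral_Iio).symm
      rw [this]
      exact (cont_Iic hint).comp continuous_neg
    have hB : ∀ t : ℝ, 0 ≤ t → (∫ x in Set.Iio (-t), f x) = 0 :=
      cont_zero_of_ae_zero hcontB haeB
    have hGneg : ∀ t : ℝ, t ≤ 0 → (∫ x in Set.Iic t, f x) = 0 := by
      intro t ht
      have := hB (-t) (by linarith)
      rw [neg_neg] at this
      rw [integral_Iic_eq_integral_Iio]
      exact this
    have htot : (∫ x, f x) = 0 := by
      rw [← intervalIntegral.integral_Iic_add_Ioi hint.integrableOn hint.integrableOn (b := 0)]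
      rw [hGneg 0 le_rfl, hA 0 le_rfl, add_zero]
    have hG : ∀ t : ℝ, (∫ x in Set.Iic t, f x) = 0 := by
      intro t
      rcases le_or_gt t 0 with ht | ht
      · exact hGneg t ht
      · have := intervalIntegral.integral_Iic_add_Ioi (b := t) hint.integrableOn hint.integrableOn
        rw [htot, hA t ht.le, add_zero] at this
        exact this
    exact ae_zero_of_Iic hf hint hG htot
  · intro hzero
    have hN : volume {x : ℝ | f x ≠ 0} = 0 := by
      have := ae_iff.mp hzero
      simpa using this
    have hprod0 : volume ({x : ℝ | f x ≠ 0} ×ˢ (Set.univ : Set ℝ)) = 0 := by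
      rw [Measure.volume_eq_prod, Measure.prod_prod, hN, zero_mul]
    have hsub : {p : ℝ × ℝ | ¬ (min (|p.1|) (|p.2|) * f p.1 * f p.2 = 0)}
        ⊆ {x : ℝ | f x ≠ 0} ×ˢ (Set.univ : Set ℝ) := by
      intro p hp
      refine ⟨?_, Set.mem_univ _⟩
      intro hfp
      exact hp (by rw [hfp]; ring)
    have hae0 : ∀ᵐ p : ℝ × ℝ ∂volume, min (|p.1|) (|p.2|) * f p.1 * f p.2 = 0 :=
      ae_iff.mpr (measure_mono_null hsub hprod0)
    have : ∀ᵐ p : ℝ × ℝ ∂(volume.restrict {p : ℝ × ℝ | 0 < p.1 * p.2}),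
        min (|p.1|) (|p.2|) * f p.1 * f p.2 = 0 := ae_restrict_of_ae hae0
    exact integral_eq_zero_of_ae this
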